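/- Fix C ∈ (0,∞), d ≥ 1, and p ∈ ℕ (p ≥ 1). On the convex set 𝓜 := {A positive definite d×d : A ≤ C·I}, the function Ψ(M) := tr(M^{−p}) is μ-strongly convex with respect to the Frobenius norm, where μ := p(p+1)/C^{p+2}. That is, Ψ(N) − Ψ(M) − DΨ(M)(N−M) ≥ (μ/2)·|N−M|² for all M, N ∈ 𝓜, where DΨ(M)E = −p·tr(M^{−p−1}E). -/

import Mathlib

open Matrix

/-- The Frobenius norm `|A| = tr(Aᵀ A)^{1/2}` of a real matrix. -/
noncomputable def frob {d : ℕ} (A : Matrix (Fin d) (Fin d) ℝ) : ℝ :=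
  Real.sqrt (Aᵀ * A).trace

section Aux
open Finset

variable {d : ℕ}

local notation "Mat" => Matrix (Fin d) (Fin d) ℝ

open scoped MatrixOrder in
noncomputable def Matrix.PosSemidef.sqrt {A : Mat} (_hA : A.PosSemidef) : Mat := CFC.sqrt A

open scoped MatrixOrder in
lemma Matrix.PosSemidef.sqrt_mul_self {A : Mat} (hA : A.PosSemidef) : hA.sqrt * hA.sqrt = A :=
  CFC.sqrt_mul_sqrt_self A hA.nonneg

open scoped MatrixOrder in
lemma Matrix.PosSemidef.posSemidef_sqrt {A : Mat} (hA : A.PosSemidef) : hA.sqrt.PosSemidef :=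
  (CFC.sqrt_nonneg A).posSemidef

lemma psd_trace_nonneg {P : Mat} (hP : P.PosSemidef) : 0 ≤ P.trace := by
  rw [Matrix.trace]
  apply Finset.sum_nonneg
  intro i _
  exact hP.diag_nonneg

lemma psd_smul {P : Mat} (hP : P.PosSemidef) {c : ℝ} (hc : 0 ≤ c) : (c • P).PosSemidef := by
  refine ⟨?_, fun x => ?_⟩
  · unfold Matrix.IsHermitian
    rw [conjTranspose_smul, hP.1, star_trivial]
  · exact (hP.smul hc).2 x

lemma psd_conj {P S : Mat} (hP : P.PosSemidef) (hS : Sᵀ = S) : (S * P * S).PosSemidef := by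
  have := hP.mul_mul_conjTranspose_same S
  rwa [conjTranspose_eq_transpose_of_trivial, hS] at this

-- trace of product of two psd is nonneg
lemma psd_trace_mul_nonneg {P Q : Mat} (hP : P.PosSemidef) (hQ : Q.PosSemidef) :
    0 ≤ (P * Q).trace := by
  obtain ⟨B, hB⟩ : ∃ B : Mat, P = Bᴴ * B :=
    ⟨hP.sqrt, by rw [hP.posSemidef_sqrt.1.eq]; exact hP.sqrt_mul_self.symm⟩
  subst hB
  have h2 : (Bᴴ * B * Q).trace = (B * Q * Bᴴ).trace := by
    rw [Matrix.mul_assoc, Matrix.trace_mul_comm, Matrix.mul_assoc]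
  rw [h2]
  exact psd_trace_nonneg (hQ.mul_mul_conjTranspose_same B)

-- telescoping 1 : A^k - B^k = ∑ q in range k, B^q * (A - B) * A^(k-1-q)
lemma tele1 (A B : Mat) : ∀ k : ℕ, A ^ k - B ^ k = ∑ q ∈ range k, B ^ q * (A - B) * A ^ (k - 1 - q)
  | 0 => by simp
  | (k+1) => by
    have key : A ^ (k+1) - B ^ (k+1) = B * (A ^ k - B ^ k) + (A - B) * A ^ k := by
      rw [pow_succ' A, pow_succ' B, mul_sub, sub_mul]; abel
    rw [key, tele1 A B k, Finset.mul_sum, Finset.sum_range_succ']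
    congr 1
    · apply Finset.sum_congr rfl; intro q hq
      have h : k + 1 - 1 - (q + 1) = k - 1 - q := by omega
      rw [h, pow_succ']
      simp [Matrix.mul_assoc]
    · simp

-- telescoping 2 : A^k - B^k = ∑ q in range k, A^(k-1-q) * (A - B) * B^q
lemma tele2 (A B : Mat) : ∀ k : ℕ, A ^ k - B ^ k = ∑ q ∈ range k, A ^ (k - 1 - q) * (A - B) * B ^ q
  | 0 => by simp
  | (k+1) => by
    have key : A ^ (k+1) - B ^ (k+1) = (A ^ k - B ^ k) * B + A ^ k * (A - B) := by
      rw [pow_succ A, pow_succ B, sub_mul, mul_sub]; abel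
    rw [key, tele2 A B k, Finset.sum_mul, Finset.sum_range_succ']
    congr 1
    · apply Finset.sum_congr rfl; intro q hq
      have h : k + 1 - 1 - (q + 1) = k - 1 - q := by omega
      rw [h, pow_succ]
      simp [Matrix.mul_assoc]
    · simp

lemma pow_lower {A : Mat} (hA : A.PosSemidef) {c : ℝ} (hc : 0 ≤ c)
    (h1 : (A - c • 1).PosSemidef) : ∀ k : ℕ, (A ^ k - c ^ k • (1 : Mat)).PosSemidef
  | 0 => by simpa using Matrix.PosSemidef.zero
  | (k+1) => by
    have hSS : hA.sqrt * hA.sqrt = A := hA.sqrt_mul_self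
    have hSt : hA.sqrtᵀ = hA.sqrt := by
      have h := hA.posSemidef_sqrt.1.eq
      rwa [conjTranspose_eq_transpose_of_trivial] at h
    have hcomm : Commute hA.sqrt A := by
      show hA.sqrt * A = A * hA.sqrt
      have e1 : hA.sqrt * (hA.sqrt * hA.sqrt) = hA.sqrt * hA.sqrt * hA.sqrt :=
        (Matrix.mul_assoc _ _ _).symm
      rwa [hSS] at e1
    have h2 : hA.sqrt * A ^ k * hA.sqrt = A ^ (k + 1) := by
      rw [(hcomm.pow_right k).eq, Matrix.mul_assoc, hSS, pow_succ]
    have h3 : hA.sqrt * (c ^ k • (1 : Mat)) * hA.sqrt = c ^ k • A := by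
      rw [Matrix.mul_smul, Matrix.smul_mul, Matrix.mul_one, hSS]
    have key : A ^ (k + 1) - c ^ (k + 1) • (1 : Mat)
        = hA.sqrt * (A ^ k - c ^ k • 1) * hA.sqrt + c ^ k • (A - c • 1) := by
      rw [Matrix.mul_sub, Matrix.sub_mul, h2, h3, smul_sub, smul_smul, ← pow_succ]
      abel
    rw [key]
    exact (psd_conj (pow_lower hA hc h1 k) hSt).add (psd_smul h1 (pow_nonneg hc k))

lemma inv_lower {M : Mat} (hM : M.PosDef) {C : ℝ} (hC : 0 < C)
    (hMC : ((C • (1 : Mat)) - M).PosSemidef) : (M⁻¹ - C⁻¹ • (1 : Mat)).PosSemidef := by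
  have hdet : IsUnit M.det := hM.det_pos.ne'.isUnit
  have hMl : M⁻¹ * M = 1 := Matrix.nonsing_inv_mul M hdet
  have hMr : M * M⁻¹ = 1 := Matrix.mul_nonsing_inv M hdet
  have hA : M⁻¹.PosSemidef := hM.inv.posSemidef
  have hSS : hA.sqrt * hA.sqrt = M⁻¹ := hA.sqrt_mul_self
  have hSt : hA.sqrtᵀ = hA.sqrt := by
    have h := hA.posSemidef_sqrt.1.eq
    rwa [conjTranspose_eq_transpose_of_trivial] at h
  have hcomm : hA.sqrt * M⁻¹ = M⁻¹ * hA.sqrt := by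
    have e1 : hA.sqrt * (hA.sqrt * hA.sqrt) = hA.sqrt * hA.sqrt * hA.sqrt :=
      (Matrix.mul_assoc _ _ _).symm
    rwa [hSS] at e1
  have hcommM : hA.sqrt * M = M * hA.sqrt := by
    calc hA.sqrt * M = M * M⁻¹ * hA.sqrt * M := by rw [hMr, Matrix.one_mul]
    _ = M * (M⁻¹ * hA.sqrt) * M := by rw [Matrix.mul_assoc M]
    _ = M * (hA.sqrt * M⁻¹) * M := by rw [hcomm]
    _ = M * hA.sqrt * (M⁻¹ * M) := by simp only [Matrix.mul_assoc]
    _ = M * hA.sqrt := by rw [hMl, Matrix.mul_one]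
  have hSMS : hA.sqrt * M * hA.sqrt = 1 := by
    rw [hcommM, Matrix.mul_assoc, hSS, hMr]
  have hconj : (C • M⁻¹ - 1).PosSemidef := by
    have h := psd_conj hMC hSt
    have e : hA.sqrt * (C • (1 : Mat) - M) * hA.sqrt = C • M⁻¹ - 1 := by
      rw [Matrix.mul_sub, Matrix.sub_mul, hSMS, Matrix.mul_smul, Matrix.smul_mul,
        Matrix.mul_one, hSS]
    rwa [e] at h
  have e2 : M⁻¹ - C⁻¹ • (1 : Mat) = C⁻¹ • (C • M⁻¹ - 1) := by
    rw [smul_sub, smul_smul, inv_mul_cancel₀ hC.ne', one_smul]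
  rw [e2]
  exact psd_smul hconj (inv_nonneg.mpr hC.le)

lemma inv_pow_lower {M : Mat} (hM : M.PosDef) {C : ℝ} (hC : 0 < C)
    (hMC : ((C • (1 : Mat)) - M).PosSemidef) (k : ℕ) :
    ((M⁻¹) ^ k - (C⁻¹) ^ k • (1 : Mat)).PosSemidef :=
  pow_lower hM.inv.posSemidef (inv_nonneg.mpr hC.le) (inv_lower hM hC hMC) k

lemma trace_quad {P Q E : Mat} (hE : Eᵀ = E) {α β : ℝ} (hα : 0 ≤ α) (hβ : 0 ≤ β)
    (hP : (P - α • 1).PosSemidef) (hQ : (Q - β • 1).PosSemidef) :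
    α * β * (Eᵀ * E).trace ≤ (P * E * Q * E).trace := by
  have hQ' : Q.PosSemidef := by
    have h := hQ.add (psd_smul (Matrix.PosSemidef.one) hβ)
    simpa using h
  have hEE : (E * E).PosSemidef := by
    have h := Matrix.posSemidef_conjTranspose_mul_self E
    rwa [conjTranspose_eq_transpose_of_trivial, hE] at h
  have hEQE : (E * Q * E).PosSemidef := psd_conj hQ' hE
  have t1 : 0 ≤ ((P - α • 1) * (E * Q * E)).trace := psd_trace_mul_nonneg hP hEQE
  have t1' : α * (E * Q * E).trace ≤ (P * (E * Q * E)).trace := by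
    rw [Matrix.sub_mul, Matrix.trace_sub, Matrix.smul_mul, Matrix.one_mul,
      Matrix.trace_smul, smul_eq_mul] at t1
    linarith
  have t2 : 0 ≤ ((Q - β • 1) * (E * E)).trace := psd_trace_mul_nonneg hQ hEE
  have t2' : β * (E * E).trace ≤ (Q * (E * E)).trace := by
    rw [Matrix.sub_mul, Matrix.trace_sub, Matrix.smul_mul, Matrix.one_mul,
      Matrix.trace_smul, smul_eq_mul] at t2
    linarith
  have e1 : (E * Q * E).trace = (Q * (E * E)).trace := by
    rw [Matrix.trace_mul_comm, ← Matrix.mul_assoc, Matrix.trace_mul_comm]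
  have e2 : (P * E * Q * E).trace = (P * (E * Q * E)).trace := by
    simp only [Matrix.mul_assoc]
  have e3 : (Eᵀ * E).trace = (E * E).trace := by rw [hE]
  rw [e2, e3]
  have hEEtr : 0 ≤ (E * E).trace := psd_trace_nonneg hEE
  calc α * β * (E * E).trace = α * (β * (E * E).trace) := by ring
  _ ≤ α * (Q * (E * E)).trace := by
      apply mul_le_mul_of_nonneg_left _ hα
      exact t2'
  _ = α * (E * Q * E).trace := by rw [e1]
  _ ≤ (P * (E * Q * E)).trace := t1'

lemma gauss_sum (p : ℕ) : (∑ q ∈ range p, ((q : ℝ) + 1)) = p * (p + 1) / 2 := by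
  induction p with
  | zero => simp
  | succ n ih => rw [Finset.sum_range_succ, ih]; push_cast; ring

theorem trace_pow_inv_strongly_convex' {d : ℕ} (hd : 1 ≤ d) (C : ℝ) (hC : 0 < C)
    (p : ℕ) (hp : 1 ≤ p) (M N : Matrix (Fin d) (Fin d) ℝ)
    (hM : M.PosDef) (hN : N.PosDef)
    (hMC : ((C • (1 : Matrix (Fin d) (Fin d) ℝ)) - M).PosSemidef)
    (hNC : ((C • (1 : Matrix (Fin d) (Fin d) ℝ)) - N).PosSemidef) :
    (p : ℝ) * ((p : ℝ) + 1) / C ^ (p + 2) / 2 * Real.sqrt ((N - M)ᵀ * (N - M)).trace ^ 2 ≤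
      ((N⁻¹) ^ p).trace - ((M⁻¹) ^ p).trace -
        (-(p : ℝ) * ((M⁻¹) ^ (p + 1) * (N - M)).trace) := by
  have hMt : Mᵀ = M := by
    have h := hM.1.eq; rwa [conjTranspose_eq_transpose_of_trivial] at h
  have hNt : Nᵀ = N := by
    have h := hN.1.eq; rwa [conjTranspose_eq_transpose_of_trivial] at h
  have hdM : IsUnit M.det := hM.det_pos.ne'.isUnit
  have hdN : IsUnit N.det := hN.det_pos.ne'.isUnit
  have hMl : M⁻¹ * M = 1 := Matrix.nonsing_inv_mul M hdM
  have hMr : M * M⁻¹ = 1 := Matrix.mul_nonsing_inv M hdM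
  have hNl : N⁻¹ * N = 1 := Matrix.nonsing_inv_mul N hdN
  have hNr : N * N⁻¹ = 1 := Matrix.mul_nonsing_inv N hdN
  set E := N - M with hEdef
  have hE : Eᵀ = E := by rw [hEdef, transpose_sub, hMt, hNt]
  have diff1 : M⁻¹ - N⁻¹ = N⁻¹ * E * M⁻¹ := by
    have h : N⁻¹ * E * M⁻¹ = N⁻¹ * N * M⁻¹ - N⁻¹ * (M * M⁻¹) := by
      rw [hEdef]; noncomm_ring
    rw [h, hNl, hMr, Matrix.one_mul, Matrix.mul_one]
  have diff2 : M⁻¹ - N⁻¹ = M⁻¹ * E * N⁻¹ := by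
    have h : M⁻¹ * E * N⁻¹ = M⁻¹ * (N * N⁻¹) - M⁻¹ * M * N⁻¹ := by
      rw [hEdef]; noncomm_ring
    rw [h, hNr, hMl, Matrix.one_mul, Matrix.mul_one]
  -- Step 1
  have S1 : ((M⁻¹) ^ p).trace - ((N⁻¹) ^ p).trace
      = ∑ q ∈ range p, ((N⁻¹) ^ (q + 1) * E * (M⁻¹) ^ (p - q)).trace := by
    have t := tele1 (M⁻¹) (N⁻¹) p
    rw [diff1] at t
    have t2 : (M⁻¹) ^ p - (N⁻¹) ^ p
        = ∑ q ∈ range p, (N⁻¹) ^ (q + 1) * E * (M⁻¹) ^ (p - q) := by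
      rw [t]
      refine Finset.sum_congr rfl fun q hq => ?_
      have hq' : q < p := Finset.mem_range.mp hq
      have h1 : p - 1 - q + 1 = p - q := by omega
      calc (N⁻¹) ^ q * (N⁻¹ * E * M⁻¹) * (M⁻¹) ^ (p - 1 - q)
          = ((N⁻¹) ^ q * N⁻¹) * E * (M⁻¹ * (M⁻¹) ^ (p - 1 - q)) := by noncomm_ring
        _ = (N⁻¹) ^ (q + 1) * E * (M⁻¹) ^ (p - q) := by
            rw [← pow_succ, ← pow_succ', h1]
    calc ((M⁻¹) ^ p).trace - ((N⁻¹) ^ p).trace = ((M⁻¹) ^ p - (N⁻¹) ^ p).trace :=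
          (Matrix.trace_sub _ _).symm
      _ = _ := by rw [t2, Matrix.trace_sum]
  -- Step 2
  have S2 : (p : ℝ) * ((M⁻¹) ^ (p + 1) * E).trace
      = ∑ q ∈ range p, ((M⁻¹) ^ (q + 1) * E * (M⁻¹) ^ (p - q)).trace := by
    have term : ∀ q ∈ range p, ((M⁻¹) ^ (q + 1) * E * (M⁻¹) ^ (p - q)).trace
        = ((M⁻¹) ^ (p + 1) * E).trace := by
      intro q hq
      have hq' : q < p := Finset.mem_range.mp hq
      have h1 : p - q + (q + 1) = p + 1 := by omega
      rw [Matrix.trace_mul_comm, ← Matrix.mul_assoc, ← pow_add, h1]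
    rw [Finset.sum_congr rfl term, Finset.sum_const, Finset.card_range, nsmul_eq_mul]
  -- Step 3
  have S3 : ((N⁻¹) ^ p).trace - ((M⁻¹) ^ p).trace - (-(p : ℝ) * ((M⁻¹) ^ (p + 1) * E).trace)
      = ∑ q ∈ range p, (((M⁻¹) ^ (q + 1) - (N⁻¹) ^ (q + 1)) * E * (M⁻¹) ^ (p - q)).trace := by
    have e : ∀ q ∈ range p, (((M⁻¹) ^ (q + 1) - (N⁻¹) ^ (q + 1)) * E * (M⁻¹) ^ (p - q)).trace
        = ((M⁻¹) ^ (q + 1) * E * (M⁻¹) ^ (p - q)).trace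
          - ((N⁻¹) ^ (q + 1) * E * (M⁻¹) ^ (p - q)).trace := by
      intro q hq
      rw [Matrix.sub_mul, Matrix.sub_mul, Matrix.trace_sub]
    rw [Finset.sum_congr rfl e, Finset.sum_sub_distrib, ← S2, ← S1]
    ring
  -- per-q lower bound
  have key : ∀ q ∈ range p,
      ((q : ℝ) + 1) * ((C⁻¹) ^ (p + 2) * (Eᵀ * E).trace)
        ≤ (((M⁻¹) ^ (q + 1) - (N⁻¹) ^ (q + 1)) * E * (M⁻¹) ^ (p - q)).trace := by
    intro q hq
    have hq' : q < p := Finset.mem_range.mp hq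
    have t := tele2 (M⁻¹) (N⁻¹) (q + 1)
    rw [diff2] at t
    have expand : (((M⁻¹) ^ (q + 1) - (N⁻¹) ^ (q + 1)) * E * (M⁻¹) ^ (p - q)).trace
        = ∑ r ∈ range (q + 1), ((M⁻¹) ^ (p - r + 1) * E * (N⁻¹) ^ (r + 1) * E).trace := by
      rw [t, Finset.sum_mul, Finset.sum_mul, Matrix.trace_sum]
      refine Finset.sum_congr rfl fun r hr => ?_
      have hr' : r < q + 1 := Finset.mem_range.mp hr
      have h1 : q + 1 - 1 - r = q - r := by omega
      have mat_eq : (M⁻¹) ^ (p - q) * ((M⁻¹) ^ (q - r) * (M⁻¹ * E * N⁻¹) * (N⁻¹) ^ r * E)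
          = (M⁻¹) ^ (p - r + 1) * E * (N⁻¹) ^ (r + 1) * E := by
        have hA : (M⁻¹) ^ (p - q) * ((M⁻¹) ^ (q - r) * M⁻¹) = (M⁻¹) ^ (p - r + 1) := by
          rw [← pow_succ, ← pow_add]
          congr 1
          omega
        have hB : N⁻¹ * (N⁻¹) ^ r = (N⁻¹) ^ (r + 1) := (pow_succ' _ _).symm
        calc (M⁻¹) ^ (p - q) * ((M⁻¹) ^ (q - r) * (M⁻¹ * E * N⁻¹) * (N⁻¹) ^ r * E)
            = ((M⁻¹) ^ (p - q) * ((M⁻¹) ^ (q - r) * M⁻¹)) * E * (N⁻¹ * (N⁻¹) ^ r) * E := by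
              noncomm_ring
          _ = _ := by rw [hA, hB]
      rw [h1, Matrix.trace_mul_comm, mat_eq]
    have bound : ∀ r ∈ range (q + 1),
        (C⁻¹) ^ (p + 2) * (Eᵀ * E).trace
          ≤ ((M⁻¹) ^ (p - r + 1) * E * (N⁻¹) ^ (r + 1) * E).trace := by
      intro r hr
      have h := trace_quad hE (pow_nonneg (inv_nonneg.mpr hC.le) (p - r + 1))
        (pow_nonneg (inv_nonneg.mpr hC.le) (r + 1))
        (inv_pow_lower hM hC hMC (p - r + 1)) (inv_pow_lower hN hC hNC (r + 1))
      have h2 : (C⁻¹ : ℝ) ^ (p - r + 1) * (C⁻¹) ^ (r + 1) = (C⁻¹) ^ (p + 2) := by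
        rw [← pow_add]
        congr 1
        have hr' : r < q + 1 := Finset.mem_range.mp hr
        omega
      rwa [h2] at h
    have hs := Finset.sum_le_sum bound
    rw [Finset.sum_const, Finset.card_range, nsmul_eq_mul] at hs
    rw [expand]
    calc ((q : ℝ) + 1) * ((C⁻¹) ^ (p + 2) * (Eᵀ * E).trace)
        = ((q + 1 : ℕ) : ℝ) * ((C⁻¹) ^ (p + 2) * (Eᵀ * E).trace) := by push_cast; ring
      _ ≤ _ := hs
  -- sum up
  have total := Finset.sum_le_sum key
  rw [← Finset.sum_mul, gauss_sum] at total
  have trEE : 0 ≤ (Eᵀ * E).trace := by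
    apply psd_trace_nonneg
    have h := Matrix.posSemidef_conjTranspose_mul_self E
    rwa [conjTranspose_eq_transpose_of_trivial] at h
  have frobsq : Real.sqrt ((N - M)ᵀ * (N - M)).trace ^ 2 = (Eᵀ * E).trace := by
    rw [← hEdef]
    exact Real.sq_sqrt trEE
  rw [S3, frobsq]
  have hCpow : (0:ℝ) < C ^ (p + 2) := pow_pos hC _
  have coef : (p : ℝ) * ((p : ℝ) + 1) / C ^ (p + 2) / 2
      = (p : ℝ) * ((p : ℝ) + 1) / 2 * (C⁻¹) ^ (p + 2) := by
    rw [inv_pow]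
    field_simp
  rw [coef]
  calc (p : ℝ) * ((p : ℝ) + 1) / 2 * (C⁻¹) ^ (p + 2) * (Eᵀ * E).trace
      = (p : ℝ) * ((p : ℝ) + 1) / 2 * ((C⁻¹) ^ (p + 2) * (Eᵀ * E).trace) := by ring
    _ ≤ _ := total

end Aux

/-- On `𝓜 = {A pos. def. : A ≤ C·I}`, the function `Ψ(M) = tr(M^{−p})` (for `p ∈ ℕ`, `p ≥ 1`)
is `μ`-strongly convex w.r.t. the Frobenius norm with `μ = p(p+1)/C^{p+2}`, where the derivative
is `DΨ(M)E = −p·tr(M^{−p−1}E)`. -/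
theorem trace_pow_inv_strongly_convex {d : ℕ} (hd : 1 ≤ d) (C : ℝ) (hC : 0 < C)
    (p : ℕ) (hp : 1 ≤ p) (M N : Matrix (Fin d) (Fin d) ℝ)
    (hM : M.PosDef) (hN : N.PosDef)
    (hMC : ((C • (1 : Matrix (Fin d) (Fin d) ℝ)) - M).PosSemidef)
    (hNC : ((C • (1 : Matrix (Fin d) (Fin d) ℝ)) - N).PosSemidef) :
    (p : ℝ) * ((p : ℝ) + 1) / C ^ (p + 2) / 2 * frob (N - M) ^ 2 ≤
      ((N⁻¹) ^ p).trace - ((M⁻¹) ^ p).trace -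
        (-(p : ℝ) * ((M⁻¹) ^ (p + 1) * (N - M)).trace) := by
  have h := trace_pow_inv_strongly_convex' hd C hC p hp M N hM hN hMC hNC
  simpa [frob] using h
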